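/- (Mirsky–Newman–Davenport–Rado theorem) Let a_1 (mod m_1), …, a_N (mod m_N) be residue classes that are pairwise disjoint and whose union is all of ℤ (an exact covering system), with moduli listed in non-decreasing order m_1 ≤ m_2 ≤ … ≤ m_N and m_N ≥ 2. Then m_{N−1} = m_N; that is, the largest modulus is attained by at least two of the residue classes. -/

import Mathlib

open Finset Complex Real

set_option maxHeartbeats 1000000 in
/-- Mirsky–Newman–Davenport–Rado theorem: in an exact covering system with
moduli listed in non-decreasing order and largest modulus at least 2,
the two largest moduli are equal. -/
theorem mirsky_newman_davenport_rado (N : ℕ) (hN : 0 < N)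
    (a m : Fin N → ℤ) (hm : ∀ i, 1 ≤ m i)
    (hsorted : ∀ i j : Fin N, i ≤ j → m i ≤ m j)
    (htop : 2 ≤ m ⟨N - 1, by omega⟩)
    (hdisj : ∀ i j : Fin N, i ≠ j → ∀ x : ℤ,
      x ≡ a i [ZMOD m i] → x ≡ a j [ZMOD m j] → False)
    (hcover : ∀ x : ℤ, ∃ i : Fin N, x ≡ a i [ZMOD m i]) :
    ∃ h2 : 2 ≤ N, m ⟨N - 2, by omega⟩ = m ⟨N - 1, by omega⟩ := by
  classical
  set top : Fin N := ⟨N - 1, by omega⟩ with htopdef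
  set n : Fin N → ℕ := fun i => (m i).toNat with hndef
  have hn : ∀ i, (n i : ℤ) = m i := fun i => Int.toNat_of_nonneg (by linarith [hm i])
  have hn1 : ∀ i, 1 ≤ n i := by
    intro i
    have h1 := hm i; have h2 := hn i
    omega
  set M : ℕ := n top with hMdef
  have hM2 : 2 ≤ M := by rw [hMdef]; have h1 := hn top; omega
  set L : ℕ := ∏ i, n i with hLdef
  have hLpos : 0 < L := Finset.prod_pos (fun i _ => hn1 i)
  have hdvdL : ∀ i, n i ∣ L := fun i => Finset.dvd_prod_of_mem n (mem_univ i)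
  have hMdvdL : M ∣ L := hdvdL top
  set ζ : ℂ := Complex.exp (2 * Real.pi * Complex.I / M) with hζdef
  have hprim : IsPrimitiveRoot ζ M := Complex.isPrimitiveRoot_exp M (by omega)
  have hζpow : ∀ t : ℕ, ζ ^ t = 1 ↔ M ∣ t := fun t => hprim.pow_eq_one_iff_dvd t
  have hζne1 : ζ ≠ 1 := by
    intro h
    have h2 := (hζpow 1).mp (by rw [pow_one, h])
    have h3 := Nat.le_of_dvd one_pos h2
    omega
  have hζne0 : ζ ≠ 0 := hprim.ne_zero (by omega)
  set P : Fin N → ℕ → Prop := fun i x => ((x : ℤ) ≡ a i [ZMOD m i]) with hPdef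
  have key : (∀ i : Fin N, n i = M → i = top) → False := by
    intro huniq
    set r : Fin N → ℕ := fun i => (a i % m i).toNat with hrdef
    have hr : ∀ i, (r i : ℤ) = a i % m i := fun i =>
      Int.toNat_of_nonneg (Int.emod_nonneg _ (by have := hm i; omega))
    have hrlt : ∀ i, r i < n i := by
      intro i
      have h1 : a i % m i < m i := Int.emod_lt_of_pos _ (by linarith [hm i])
      have h2 := hr i; have h3 := hn i
      omega
    have hrmod : ∀ i, (r i : ℤ) ≡ a i [ZMOD m i] := by
      intro i
      show (r i : ℤ) % m i = a i % m i
      rw [hr]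
      exact Int.emod_emod_of_dvd _ dvd_rfl
    have hfilter : ∀ i : Fin N,
        (Finset.range L).filter (P i) =
        (Finset.range (L / n i)).image (fun k => r i + n i * k) := by
      intro i
      ext x
      simp only [mem_filter, mem_image, mem_range, hPdef]
      constructor
      · rintro ⟨hxL, hmod⟩
        have hxr : x % n i = r i := by
          have h1 : (x : ℤ) % m i = a i % m i := hmod
          have h2 : ((x % n i : ℕ) : ℤ) = (x : ℤ) % (n i : ℤ) := Int.natCast_mod x (n i)
          rw [hn] at h2
          have h3 : ((x % n i : ℕ) : ℤ) = (r i : ℤ) := by rw [h2, h1, hr]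
          exact_mod_cast h3
        refine ⟨x / n i, Nat.div_lt_div_of_lt_of_dvd (hdvdL i) hxL, ?_⟩
        have := Nat.div_add_mod x (n i)
        omega
      · rintro ⟨k, hk, rfl⟩
        constructor
        · have h1 : n i * (L / n i) = L := Nat.mul_div_cancel' (hdvdL i)
          have h2 : r i < n i := hrlt i
          have h3 : k + 1 ≤ L / n i := hk
          have h4 : n i * (k + 1) ≤ n i * (L / n i) := Nat.mul_le_mul_left _ h3
          have h5 : n i * (k + 1) = n i * k + n i := by ring
          omega
        · have h1 : ((r i + n i * k : ℕ) : ℤ) ≡ (r i : ℤ) [ZMOD m i] := by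
            show ((r i + n i * k : ℕ) : ℤ) % m i = (r i : ℤ) % m i
            push_cast
            rw [hn]
            simp [Int.add_mul_emod_self_left]
          exact h1.trans (hrmod i)
    have hinj : ∀ i : Fin N, ∀ k1 ∈ Finset.range (L / n i), ∀ k2 ∈ Finset.range (L / n i),
        r i + n i * k1 = r i + n i * k2 → k1 = k2 := by
      intro i k1 _ k2 _ h
      have h2 : n i * k1 = n i * k2 := by omega
      exact Nat.eq_of_mul_eq_mul_left (hn1 i) h2
    have hsum_i : ∀ i : Fin N,
        ∑ x ∈ (Finset.range L).filter (P i), ζ ^ x =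
        ζ ^ (r i) * ∑ k ∈ Finset.range (L / n i), (ζ ^ (n i)) ^ k := by
      intro i
      rw [hfilter i, Finset.sum_image (hinj i), Finset.mul_sum]
      refine Finset.sum_congr rfl fun k _ => ?_
      rw [pow_add, pow_mul]
    have hzero : ∀ i : Fin N, i ≠ top →
        ∑ x ∈ (Finset.range L).filter (P i), ζ ^ x = 0 := by
      intro i hi
      have hniM : n i ≠ M := fun h => hi (huniq i h)
      have hile : i ≤ top := by
        rw [htopdef, Fin.le_def]
        have := i.2
        simp only []
        omega
      have hnile : n i ≤ M := by
        have h1 : m i ≤ m top := hsorted i top hile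
        have h2 := hn i; have h3 := hn top
        rw [hMdef]
        omega
      have hnd : ¬ M ∣ n i := by
        intro h
        have := Nat.le_of_dvd (hn1 i) h
        omega
      have hne1 : ζ ^ (n i) ≠ 1 := fun h => hnd ((hζpow (n i)).mp h)
      rw [hsum_i i, geom_sum_eq hne1]
      have h1 : (ζ ^ n i) ^ (L / n i) = ζ ^ L := by
        rw [← pow_mul, Nat.mul_div_cancel' (hdvdL i)]
      rw [h1, (hζpow L).mpr hMdvdL]
      simp
    have htopsum :
        ∑ x ∈ (Finset.range L).filter (P top), ζ ^ x =
        ζ ^ (r top) * (L / M : ℕ) := by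
      rw [hsum_i top]
      have h1 : ζ ^ (n top) = 1 := (hζpow M).mpr dvd_rfl
      rw [h1]
      simp
      exact Or.inl rfl
    have hpart : ∑ x ∈ Finset.range L, ζ ^ x =
        ∑ i : Fin N, ∑ x ∈ (Finset.range L).filter (P i), ζ ^ x := by
      have h1 : ∀ i : Fin N,
          ∑ x ∈ (Finset.range L).filter (P i), ζ ^ x =
          ∑ x ∈ Finset.range L, if P i x then ζ ^ x else 0 := by
        intro i; rw [Finset.sum_filter]
      rw [Finset.sum_congr rfl (fun i _ => h1 i), Finset.sum_comm]
      refine Finset.sum_congr rfl fun x _ => ?_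
      obtain ⟨i0, hi0⟩ := hcover (x : ℤ)
      rw [Finset.sum_eq_single i0]
      · simp [hPdef, hi0]
      · intro b _ hb
        simp only [ite_eq_right_iff]
        intro hbmod
        exact (hdisj b i0 hb (x : ℤ) hbmod hi0).elim
      · intro h; exact absurd (Finset.mem_univ i0) h
    have hS : ∑ x ∈ Finset.range L, ζ ^ x = 0 := by
      rw [geom_sum_eq hζne1, (hζpow L).mpr hMdvdL]
      simp
    rw [hpart, Finset.sum_eq_single top (fun b _ hb => hzero b hb)
      (fun h => absurd (Finset.mem_univ top) h), htopsum] at hS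
    have hLM : 0 < L / M := Nat.div_pos (Nat.le_of_dvd hLpos hMdvdL) (by omega)
    have hcast : ((L / M : ℕ) : ℂ) ≠ 0 := Nat.cast_ne_zero.mpr hLM.ne'
    exact (mul_ne_zero (pow_ne_zero (r top) hζne0) hcast) hS
  have hN2 : 2 ≤ N := by
    by_contra h
    apply key
    intro i _
    have := i.2
    rw [htopdef]
    exact Fin.ext (by omega)
  refine ⟨hN2, ?_⟩
  by_contra hne
  apply key
  intro i hi
  by_contra hitop
  have hival : i.1 ≠ N - 1 := by
    intro h
    exact hitop (by rw [htopdef]; exact Fin.ext h)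
  have h1 : i.1 ≤ N - 2 := by have := i.2; omega
  have h2 : m i ≤ m ⟨N - 2, by omega⟩ := hsorted i ⟨N - 2, by omega⟩ (by
    rw [Fin.le_def]; exact h1)
  have h3 : m ⟨N - 2, by omega⟩ ≤ m top := hsorted _ _ (by
    rw [htopdef, Fin.le_def]; simp; omega)
  have h4 : m i = m top := by
    have ha := hn i; have hb := hn top
    have hc := hm i; have hd := hm top
    rw [hMdef] at hi
    omega
  have h5 : m ⟨N - 2, by omega⟩ = m top := le_antisymm h3 (h4 ▸ h2)
  exact hne h5
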